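/- Let ℓ, n, m ≥ 1 and identify Σ_{ℓ,n,m} = ℝ^{ℓ×n} × ℝ^{ℓ×n} × ℝ^{ℓ×m} with ℝ^{ℓ(2n+m)}. The set S = {(E,A,B) ∈ Σ_{ℓ,n,m} : rk [E, A, B] = rk [E, B]} (the set of freely initializable differential-algebraic systems d/dt(Ex) = Ax + Bu) is generic if, and only if, ℓ ≤ n + m. -/

import Mathlib

/-- A set `V ⊆ ℝ^N` is an algebraic variety if it is the common zero locus of
finitely many polynomials. -/
def IsAlgVariety {ι F : Type} [CommRing F] (V : Set (ι → F)) : Prop :=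
  ∃ (k : ℕ) (p : Fin k → MvPolynomial ι F),
    V = {x | ∀ i, MvPolynomial.eval x (p i) = 0}

/-- A set `S ⊆ ℝ^N` is generic if its complement is contained in a proper
algebraic variety. -/
def IsGeneric {ι F : Type} [CommRing F] (S : Set (ι → F)) : Prop :=
  ∃ V : Set (ι → F), IsAlgVariety V ∧ V ≠ Set.univ ∧ Sᶜ ⊆ V

/-- Index set of the coordinates of `Σ_{ℓ,n,m} = ℝ^{ℓ×n} × ℝ^{ℓ×n} × ℝ^{ℓ×m} ≅ ℝ^{ℓ(2n+m)}`. -/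
abbrev SigmaIdx (l n m : ℕ) : Type := (Fin l × Fin n) ⊕ (Fin l × Fin n) ⊕ (Fin l × Fin m)

/-- The matrix `E` of a point of `Σ_{ℓ,n,m}`. -/
def Emat {l n m : ℕ} (x : SigmaIdx l n m → ℝ) : Matrix (Fin l) (Fin n) ℝ :=
  Matrix.of fun i j => x (Sum.inl (i, j))

/-- The matrix `A` of a point of `Σ_{ℓ,n,m}`. -/
def Amat {l n m : ℕ} (x : SigmaIdx l n m → ℝ) : Matrix (Fin l) (Fin n) ℝ :=
  Matrix.of fun i j => x (Sum.inr (Sum.inl (i, j)))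

/-- The matrix `B` of a point of `Σ_{ℓ,n,m}`. -/
def Bmat {l n m : ℕ} (x : SigmaIdx l n m → ℝ) : Matrix (Fin l) (Fin m) ℝ :=
  Matrix.of fun i j => x (Sum.inr (Sum.inr (i, j)))

open Matrix MvPolynomial

/-- Any (rectangular) submatrix has rank at most the rank of the matrix. -/
theorem myrank_submatrix_le {K : Type*} [Field K] {m' n' k1 k2 : Type*}
    [Fintype m'] [Fintype n'] [Fintype k1] [Fintype k2]
    [DecidableEq m'] [DecidableEq n']
    (M : Matrix m' n' K) (r : k1 → m') (c : k2 → n') :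
    (M.submatrix r c).rank ≤ M.rank := by
  have h : M.submatrix r c =
      (Matrix.of fun a i => if r a = i then (1:K) else 0) * M *
      (Matrix.of fun j b => if c b = j then (1:K) else 0) := by
    ext a b
    simp [Matrix.mul_apply, ite_mul, mul_ite, Finset.sum_ite_eq, Finset.sum_ite_eq']
  rw [h]
  exact le_trans (Matrix.rank_mul_le_left _ _) (Matrix.rank_mul_le_right _ _)

theorem myrank_ge_of_det_submatrix {k : ℕ} {m' n' : Type*}
    [Fintype m'] [Fintype n'] [DecidableEq m'] [DecidableEq n']
    (M : Matrix m' n' ℝ) (r : Fin k → m') (c : Fin k → n')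
    (h : (M.submatrix r c).det ≠ 0) : k ≤ M.rank := by
  have hu : IsUnit (M.submatrix r c) :=
    (Matrix.isUnit_iff_isUnit_det _).mpr (isUnit_iff_ne_zero.mpr h)
  have h1 : (M.submatrix r c).rank = k := by
    rw [Matrix.rank_of_isUnit _ hu, Fintype.card_fin]
  calc k = (M.submatrix r c).rank := h1.symm
    _ ≤ M.rank := myrank_submatrix_le M r c

/-- coordinate index of entry `(i,j)` of the big matrix `[E A B]`. -/
def colIdx {l n m : ℕ} (i : Fin l) : (Fin n ⊕ (Fin n ⊕ Fin m)) → SigmaIdx l n m :=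
  Sum.elim (fun j => Sum.inl (i, j))
    (Sum.elim (fun j => Sum.inr (Sum.inl (i, j))) (fun j => Sum.inr (Sum.inr (i, j))))

theorem colIdx_inj {l n m : ℕ} {i i' : Fin l} {j j' : Fin n ⊕ (Fin n ⊕ Fin m)}
    (h : colIdx (n := n) (m := m) i j = colIdx i' j') : i = i' ∧ j = j' := by
  rcases j with j | j | j <;> rcases j' with j' | j' | j' <;>
    simp_all [colIdx, Prod.ext_iff]

/-- The set of freely initializable DAE systems `d/dt(Ex) = Ax + Bu`, i.e. those with
`rk [E, A, B] = rk [E, B]`, is generic in `Σ_{ℓ,n,m}` if, and only if, `ℓ ≤ n + m`. -/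
theorem statement_14 (l n m : ℕ) (hl : 1 ≤ l) (hn : 1 ≤ n) (hm : 1 ≤ m) :
    IsGeneric {x : SigmaIdx l n m → ℝ |
        (Matrix.fromCols (Emat x) (Matrix.fromCols (Amat x) (Bmat x))).rank =
          (Matrix.fromCols (Emat x) (Bmat x)).rank} ↔
      l ≤ n + m := by
  classical
  set S : Set (SigmaIdx l n m → ℝ) := {x : SigmaIdx l n m → ℝ |
        (Matrix.fromCols (Emat x) (Matrix.fromCols (Amat x) (Bmat x))).rank =
          (Matrix.fromCols (Emat x) (Bmat x)).rank} with hS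
  -- the polynomial matrices
  set PEB : Matrix (Fin l) (Fin n ⊕ Fin m) (MvPolynomial (SigmaIdx l n m) ℝ) :=
    Matrix.of fun i j => X (Sum.elim (fun j => Sum.inl (i, j))
      (fun j => Sum.inr (Sum.inr (i, j))) j) with hPEB
  have hPEBmap : ∀ x : SigmaIdx l n m → ℝ,
      PEB.map (eval x) = fromCols (Emat x) (Bmat x) := by
    intro x; ext i j; rcases j with j | j <;> simp [hPEB, Emat, Bmat]
  set PEAB : Matrix (Fin l) (Fin n ⊕ (Fin n ⊕ Fin m)) (MvPolynomial (SigmaIdx l n m) ℝ) :=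
    Matrix.of fun i j => X (colIdx i j) with hPEAB
  have hPEABmap : ∀ x : SigmaIdx l n m → ℝ,
      PEAB.map (eval x) = fromCols (Emat x) (fromCols (Amat x) (Bmat x)) := by
    intro x; ext i j; rcases j with j | j | j <;> simp [hPEAB, colIdx, Emat, Amat, Bmat]
  -- the small matrix [E B] is a column submatrix of the big one
  have hsubEB : ∀ x : SigmaIdx l n m → ℝ,
      fromCols (Emat x) (Bmat x) =
        (fromCols (Emat x) (fromCols (Amat x) (Bmat x))).submatrix id
          (Sum.map id Sum.inr) := by
    intro x; ext i j; rcases j with j | j <;> rfl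
  constructor
  · -- genericity implies l ≤ n + m
    rintro ⟨V, ⟨k, P, hV⟩, hVne, hsub⟩
    by_contra hgt
    push_neg at hgt
    obtain ⟨y, hy⟩ := (Set.ne_univ_iff_exists_notMem V).mp hVne
    rw [hV] at hy
    simp only [Set.mem_setOf_eq, not_forall] at hy
    obtain ⟨i₀, hi₀⟩ := hy
    -- choose an (n+m+1) × (n+m+1) submatrix of the big matrix
    have hk'l : n + m + 1 ≤ l := hgt
    have hc : n + m + 1 ≤ n + (n + m) := by omega
    set r : Fin (n + m + 1) → Fin l := Fin.castLE hk'l with hr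
    have hrinj : Function.Injective r := Fin.castLE_injective _
    set ce : Fin (n + (n + m)) ≃ (Fin n ⊕ (Fin n ⊕ Fin m)) :=
      finSumFinEquiv.symm.trans ((Equiv.refl (Fin n)).sumCongr finSumFinEquiv.symm) with hce
    set c : Fin (n + m + 1) → (Fin n ⊕ (Fin n ⊕ Fin m)) := ce ∘ Fin.castLE hc with hcdef
    have hcinj : Function.Injective c := ce.injective.comp (Fin.castLE_injective _)
    set g : MvPolynomial (SigmaIdx l n m) ℝ := (PEAB.submatrix r c).det with hg
    -- evaluation of g
    have hgeval : ∀ x : SigmaIdx l n m → ℝ, eval x g =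
        ((fromCols (Emat x) (fromCols (Amat x) (Bmat x))).submatrix r c).det := by
      intro x
      rw [hg, RingHom.map_det]
      congr 1
      rw [RingHom.mapMatrix_apply, ← Matrix.submatrix_map, hPEABmap]
    -- if g does not vanish at x, then x ∉ S
    have hgS : ∀ x : SigmaIdx l n m → ℝ, eval x g ≠ 0 → x ∈ Sᶜ := by
      intro x hx
      rw [hgeval] at hx
      have hbig : n + m + 1 ≤
          (fromCols (Emat x) (fromCols (Amat x) (Bmat x))).rank :=
        myrank_ge_of_det_submatrix _ r c hx
      have hsmall : (fromCols (Emat x) (Bmat x)).rank ≤ n + m := by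
        refine le_trans (Matrix.rank_le_card_width _) ?_
        simp
      intro hxS
      rw [hS, Set.mem_setOf_eq] at hxS
      omega
    -- hence P i₀ * g vanishes identically
    have hvanish : P i₀ * g = 0 := by
      apply MvPolynomial.funext
      intro x
      rw [map_zero, _root_.map_mul]
      by_cases hgx : eval x g = 0
      · rw [hgx, mul_zero]
      · have hxV : x ∈ V := hsub (hgS x hgx)
        rw [hV] at hxV
        rw [hxV i₀, zero_mul]
    -- but g is not the zero polynomial
    have hgne : g ≠ 0 := by
      set x₁ : SigmaIdx l n m → ℝ :=
        fun s => if ∃ a : Fin (n + m + 1), s = colIdx (r a) (c a) then 1 else 0 with hx₁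
      have h1 : ((fromCols (Emat x₁) (fromCols (Amat x₁) (Bmat x₁))).submatrix r c) =
          (1 : Matrix (Fin (n + m + 1)) (Fin (n + m + 1)) ℝ) := by
        ext a b
        have hentry : (fromCols (Emat x₁) (fromCols (Amat x₁) (Bmat x₁)))
            (r a) (c b) = x₁ (colIdx (r a) (c b)) := by
          rcases hcb : c b with j | j | j <;> simp [colIdx, Emat, Amat, Bmat]
        rw [Matrix.submatrix_apply, hentry, Matrix.one_apply]
        by_cases hab : a = b
        · subst hab
          rw [if_pos rfl]
          exact if_pos ⟨a, rfl⟩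
        · rw [if_neg hab]
          refine if_neg ?_
          rintro ⟨a', ha'⟩
          obtain ⟨h1, h2⟩ := colIdx_inj ha'
          exact hab ((hrinj h1).trans (hcinj h2).symm)
      have : eval x₁ g = 1 := by
        rw [hgeval, h1, Matrix.det_one]
      intro h0
      rw [h0, map_zero] at this
      exact zero_ne_one this
    have hPne : P i₀ ≠ 0 := fun h0 => hi₀ (by rw [h0, map_zero])
    rcases mul_eq_zero.mp hvanish with h | h
    · exact hPne h
    · exact hgne h
  · -- l ≤ n + m implies genericity
    intro h
    set p : MvPolynomial (SigmaIdx l n m) ℝ := (PEB * PEBᵀ).det with hp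
    have hpeval : ∀ x : SigmaIdx l n m → ℝ, eval x p =
        ((fromCols (Emat x) (Bmat x)) * (fromCols (Emat x) (Bmat x))ᵀ).det := by
      intro x
      rw [hp, RingHom.map_det]
      congr 1
      rw [RingHom.mapMatrix_apply, Matrix.map_mul, Matrix.transpose_map, hPEBmap]
    refine ⟨{x | ∀ _i : Fin 1, eval x p = 0}, ⟨1, fun _ => p, rfl⟩, ?_, ?_⟩
    · -- the variety is proper
      intro hV
      set emb : Fin l → (Fin n ⊕ Fin m) := finSumFinEquiv.symm ∘ Fin.castLE h with hemb
      have hembinj : Function.Injective emb :=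
        finSumFinEquiv.symm.injective.comp (Fin.castLE_injective _)
      set x₀ : SigmaIdx l n m → ℝ := fun s =>
        Sum.elim (fun q : Fin l × Fin n => if emb q.1 = Sum.inl q.2 then (1:ℝ) else 0)
          (Sum.elim (fun _ : Fin l × Fin n => (0:ℝ))
            (fun q : Fin l × Fin m => if emb q.1 = Sum.inr q.2 then 1 else 0)) s with hx₀
      have hM : ∀ i c', fromCols (Emat x₀) (Bmat x₀) i c' =
          if emb i = c' then 1 else 0 := by
        intro i c'; rcases c' with j | j <;> simp [Emat, Bmat, hx₀]
      have hone : fromCols (Emat x₀) (Bmat x₀) *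
          (fromCols (Emat x₀) (Bmat x₀))ᵀ = 1 := by
        ext i i'
        rw [Matrix.mul_apply, Matrix.one_apply]
        simp only [Matrix.transpose_apply, hM]
        rw [Finset.sum_congr rfl (fun cc _ => ite_mul _ _ _ _)]
        simp [Finset.sum_ite_eq, hembinj.eq_iff, eq_comm]
      have := Set.eq_univ_iff_forall.mp hV x₀ 0
      rw [hpeval, hone, Matrix.det_one] at this
      exact zero_ne_one this.symm
    · -- the complement of S is contained in the variety
      intro x hx _i
      by_contra hne
      apply hx
      rw [hpeval] at hne
      have hu : IsUnit (fromCols (Emat x) (Bmat x) * (fromCols (Emat x) (Bmat x))ᵀ) :=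
        (Matrix.isUnit_iff_isUnit_det _).mpr (isUnit_iff_ne_zero.mpr hne)
      have hrk : (fromCols (Emat x) (Bmat x)).rank = l := by
        rw [← Matrix.rank_self_mul_transpose, Matrix.rank_of_isUnit _ hu, Fintype.card_fin]
      have hle : (fromCols (Emat x) (fromCols (Amat x) (Bmat x))).rank ≤ l := by
        refine le_trans (Matrix.rank_le_card_height _) ?_
        simp
      have hge : (fromCols (Emat x) (Bmat x)).rank ≤
          (fromCols (Emat x) (fromCols (Amat x) (Bmat x))).rank := by
        rw [hsubEB x]
        exact myrank_submatrix_le _ _ _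
      rw [hS, Set.mem_setOf_eq]
      omega
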